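/- Let S ⊂ M_d be a Hermitian subspace containing no positive semidefinite element other than 0, and let T : S → M_{d'} be a Hermiticity-preserving linear map. Then there exists a completely positive linear map T̃ : M_d → M_{d'} with T̃(X) = T(X) for all X ∈ S. -/

import Mathlib

open scoped Kronecker ComplexOrder Matrix.Norms.L2Operator
open Matrix Filter Classical

/-- `M_d`, the algebra of `d × d` complex matrices. -/
abbrev Mat (d : ℕ) := Matrix (Fin d) (Fin d) ℂ

/-- A linear map `T : S → M_{d'}` on a subspace `S ⊆ M_d` is completely positive if for
every `n` and every positive semidefinite `P = Σ_j X_j ⊗ K_j` with `X_j ∈ S`, `K_j ∈ M_n`,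
the matrix `(T ⊗ id_n)(P) = Σ_j T(X_j) ⊗ K_j` is positive semidefinite. -/
def IsCPOn {d d' : ℕ} (S : Submodule ℂ (Mat d)) (T : S →ₗ[ℂ] Mat d') : Prop :=
  ∀ (n m : ℕ) (X : Fin m → S) (K : Fin m → Matrix (Fin n) (Fin n) ℂ),
    (∑ j, (X j : Mat d) ⊗ₖ K j).PosSemidef →
    (∑ j, (T (X j)) ⊗ₖ K j).PosSemidef

/-- Complete positivity for a linear map defined on all of `M_d`. -/
def IsCP {d d' : ℕ} (T : Mat d →ₗ[ℂ] Mat d') : Prop :=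
  ∀ (n m : ℕ) (X : Fin m → Mat d) (K : Fin m → Matrix (Fin n) (Fin n) ℂ),
    (∑ j, X j ⊗ₖ K j).PosSemidef →
    (∑ j, T (X j) ⊗ₖ K j).PosSemidef

/-- A Hermiticity-preserving linear map on a Hermitian subspace containing no nonzero
positive semidefinite element extends to a completely positive map on `M_d`. -/

noncomputable def choi {d d' : ℕ} (Φ : Mat d →ₗ[ℂ] Mat d') :
    Matrix (Fin d × Fin d') (Fin d × Fin d') ℂ :=
  Matrix.of fun p q => Φ (single p.1 q.1 1) p.2 q.2

lemma apply_eq_sum {d : ℕ} {W : Type*} [AddCommMonoid W] [Module ℂ W]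
    (Φ : Mat d →ₗ[ℂ] W) (X : Mat d) :
    Φ X = ∑ i, ∑ j, X i j • Φ (single i j 1) := by
  conv_lhs => rw [matrix_eq_sum_single X]
  rw [map_sum]
  refine Finset.sum_congr rfl fun i _ => ?_
  rw [map_sum]
  refine Finset.sum_congr rfl fun j _ => ?_
  rw [← _root_.map_smul, smul_single, smul_eq_mul, mul_one]

lemma kron_conjTranspose {l m n p : Type*} (A : Matrix l m ℂ) (B : Matrix n p ℂ) :
    (A ⊗ₖ B)ᴴ = Aᴴ ⊗ₖ Bᴴ := by
  ext ⟨i, a⟩ ⟨j, b⟩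
  simp [conjTranspose_apply, mul_comm]

lemma sum_kron {l m n p ι : Type*} (s : Finset ι) (A : ι → Matrix l m ℂ) (B : Matrix n p ℂ) :
    (∑ k ∈ s, A k) ⊗ₖ B = ∑ k ∈ s, A k ⊗ₖ B := by
  ext ⟨i, a⟩ ⟨j, b⟩
  simp [Matrix.sum_apply, Finset.sum_mul]

lemma psd_sum {n ι : Type*} [Fintype n] (s : Finset ι) (A : ι → Matrix n n ℂ)
    (h : ∀ k ∈ s, (A k).PosSemidef) : (∑ k ∈ s, A k).PosSemidef := by
  classical
  induction s using Finset.induction with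
  | empty => simpa using Matrix.PosSemidef.zero
  | insert k s hk ih =>
      rw [Finset.sum_insert hk]
      exact ((h _ (Finset.mem_insert_self _ _)).add
        (ih fun k hk' => h k (Finset.mem_insert_of_mem hk')))

open scoped MatrixOrder in
lemma psd_eq_conjTranspose_mul_self {n : Type*} [Fintype n] [DecidableEq n] {M : Matrix n n ℂ}
    (hM : M.PosSemidef) : ∃ B : Matrix n n ℂ, M = Bᴴ * B := by
  obtain ⟨B, hB⟩ := CStarAlgebra.nonneg_iff_eq_star_mul_self.mp hM.nonneg
  exact ⟨B, hB⟩

lemma isCP_of_choi_psd {d d' : ℕ} (Φ : Mat d →ₗ[ℂ] Mat d')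
    (h : (choi Φ).PosSemidef) : IsCP Φ := by
  obtain ⟨B, hB⟩ := psd_eq_conjTranspose_mul_self h
  set A : (Fin d × Fin d') → Matrix (Fin d') (Fin d) ℂ :=
    fun k => Matrix.of fun a i => star (B k (i, a)) with hA
  have hKraus : ∀ X : Mat d, Φ X = ∑ k, A k * X * (A k)ᴴ := by
    intro X
    ext a b
    rw [apply_eq_sum Φ X]
    have hC : ∀ i j, Φ (single i j 1) a b =
        ∑ k, star (B k (i, a)) * B k (j, b) := by
      intro i j
      have h0 : Φ (single i j 1) a b = (Bᴴ * B) (i, a) (j, b) :=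
        congrFun (congrFun hB (i, a)) (j, b)
      rw [h0, Matrix.mul_apply]
      simp [conjTranspose_apply]
    have lhs : (∑ i, ∑ j, X i j • Φ (single i j 1)) a b
        = ∑ i, ∑ j, ∑ k : Fin d × Fin d', star (B k (i, a)) * X i j * B k (j, b) := by
      rw [Matrix.sum_apply]
      refine Finset.sum_congr rfl fun i _ => ?_
      rw [Matrix.sum_apply]
      refine Finset.sum_congr rfl fun j _ => ?_
      rw [Matrix.smul_apply, hC i j, smul_eq_mul, Finset.mul_sum]
      exact Finset.sum_congr rfl fun k _ => by ring
    have rhs : (∑ k : Fin d × Fin d', A k * X * (A k)ᴴ) a b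
        = ∑ k : Fin d × Fin d', ∑ i, ∑ j, star (B k (i, a)) * X i j * B k (j, b) := by
      rw [Matrix.sum_apply]
      refine Finset.sum_congr rfl fun k _ => ?_
      simp only [Matrix.mul_apply, Finset.sum_mul, conjTranspose_apply, hA, Matrix.of_apply,
        star_star]
      rw [Finset.sum_comm]
    rw [lhs, rhs]
    exact (Finset.sum_congr rfl fun i _ => Finset.sum_comm).trans Finset.sum_comm
  intro n m X K hP
  have key : ∑ j, Φ (X j) ⊗ₖ K j
      = ∑ k, (A k ⊗ₖ (1 : Matrix (Fin n) (Fin n) ℂ)) * (∑ j, X j ⊗ₖ K j) *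
          (A k ⊗ₖ (1 : Matrix (Fin n) (Fin n) ℂ))ᴴ := by
    have : ∀ k, (A k ⊗ₖ (1 : Matrix (Fin n) (Fin n) ℂ)) * (∑ j, X j ⊗ₖ K j) *
        (A k ⊗ₖ (1 : Matrix (Fin n) (Fin n) ℂ))ᴴ
        = ∑ j, (A k * X j * (A k)ᴴ) ⊗ₖ K j := by
      intro k
      rw [kron_conjTranspose, conjTranspose_one, Matrix.mul_sum, Matrix.sum_mul]
      refine Finset.sum_congr rfl fun j _ => ?_
      rw [← mul_kronecker_mul, ← mul_kronecker_mul, one_mul, mul_one]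
    simp_rw [this]
    rw [Finset.sum_comm]
    refine Finset.sum_congr rfl fun j _ => ?_
    rw [hKraus (X j), sum_kron]
  rw [key]
  exact psd_sum _ _ fun k _ => hP.mul_mul_conjTranspose_same _


lemma psd_empty {n : Type*} [Fintype n] [IsEmpty n] (M : Matrix n n ℂ) : M.PosSemidef := by
  constructor
  · ext i j; exact (IsEmpty.false i).elim
  · intro x
    simp [Subsingleton.elim x 0]

lemma psd_smul {n : Type*} [Fintype n] {M : Matrix n n ℂ} (hM : M.PosSemidef) {c : ℝ}
    (hc : 0 ≤ c) : ((c : ℂ) • M).PosSemidef := by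
  refine Matrix.PosSemidef.of_dotProduct_mulVec_nonneg ?_ ?_
  · show ((c:ℂ) • M)ᴴ = _
    rw [conjTranspose_smul, hM.1.eq]
    norm_num
  · intro x
    have := hM.dotProduct_mulVec_nonneg x
    rw [Matrix.smul_mulVec, dotProduct_smul]
    rw [smul_eq_mul]
    exact mul_nonneg (by exact_mod_cast hc) this

lemma sub_smul_one_psd {n : Type*} [Fintype n] [DecidableEq n] {M : Matrix n n ℂ}
    (hM : M.IsHermitian) (r : ℝ) (h : ∀ i, r ≤ hM.eigenvalues i) :
    (M - (r : ℂ) • 1).PosSemidef := by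
  have hU : (hM.eigenvectorUnitary : Matrix n n ℂ) * (star hM.eigenvectorUnitary : Matrix n n ℂ)
      = 1 := (Matrix.mem_unitaryGroup_iff).mp hM.eigenvectorUnitary.2
  have h1 : ((r : ℂ) • (1 : Matrix n n ℂ))
      = (hM.eigenvectorUnitary : Matrix n n ℂ) * ((r : ℂ) • (1 : Matrix n n ℂ)) *
        (star hM.eigenvectorUnitary : Matrix n n ℂ) := by
    rw [Matrix.mul_smul, Matrix.mul_one, Matrix.smul_mul, hU]
  have hd : ((r : ℂ) • (1 : Matrix n n ℂ)) = Matrix.diagonal (fun _ => (r : ℂ)) := by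
    ext i j
    by_cases hij : i = j <;> simp [Matrix.one_apply, Matrix.diagonal_apply, hij]
  have key : M - (r : ℂ) • 1
      = (hM.eigenvectorUnitary : Matrix n n ℂ) *
          Matrix.diagonal (fun i => ((hM.eigenvalues i - r : ℝ) : ℂ)) *
          (star hM.eigenvectorUnitary : Matrix n n ℂ) := by
    conv_lhs => rw [hM.spectral_theorem, h1, Unitary.conjStarAlgAut_apply]
    rw [← Matrix.sub_mul, ← Matrix.mul_sub]
    congr 1
    rw [hd, Matrix.diagonal_sub]
    congr 1
    funext i
    simp [Function.comp, Complex.ofReal_sub]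
  rw [key, Matrix.star_eq_conjTranspose]
  refine Matrix.PosSemidef.mul_mul_conjTranspose_same ?_ _
  refine Matrix.posSemidef_diagonal_iff.mpr fun i => ?_
  rw [Complex.zero_le_real (x := hM.eigenvalues i - r)]
  linarith [h i]

lemma posdef_delta {n : Type*} [Fintype n] [DecidableEq n] {B : Matrix n n ℂ}
    (hB : B.PosDef) : ∃ δ : ℝ, 0 < δ ∧ (B - (δ : ℂ) • 1).PosSemidef := by
  cases isEmpty_or_nonempty n with
  | inl h => exact ⟨1, one_pos, psd_empty _⟩
  | inr h =>
      refine ⟨Finset.univ.inf' (Finset.univ_nonempty) hB.1.eigenvalues, ?_, ?_⟩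
      · obtain ⟨i, _, hi⟩ := Finset.exists_mem_eq_inf' (Finset.univ_nonempty) hB.1.eigenvalues
        rw [hi]; exact hB.eigenvalues_pos i
      · exact sub_smul_one_psd hB.1 _ fun i => Finset.inf'_le _ (Finset.mem_univ i)

lemma exists_smul_add {n : Type*} [Fintype n] [DecidableEq n] {A B : Matrix n n ℂ}
    (hA : A.IsHermitian) {δ : ℝ} (hδ : 0 < δ) (hBδ : (B - (δ : ℂ) • 1).PosSemidef) :
    ∃ c : ℝ, 0 ≤ c ∧ (A + (c : ℂ) • B).PosSemidef := by
  cases isEmpty_or_nonempty n with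
  | inl h => exact ⟨0, le_refl 0, psd_empty _⟩
  | inr h =>
      set t : ℝ := (Finset.univ.sup' Finset.univ_nonempty fun i => -hA.eigenvalues i) ⊔ 0 with ht
      have ht0 : 0 ≤ t := le_sup_right
      have hAt : (A + (t : ℂ) • 1).PosSemidef := by
        have := sub_smul_one_psd hA (-t) fun i => by
          have : -hA.eigenvalues i ≤ t :=
            le_trans (Finset.le_sup' (fun i => -hA.eigenvalues i) (Finset.mem_univ i))
              le_sup_left
          linarith
        simpa [sub_neg_eq_add, Complex.ofReal_neg, neg_smul] using this
      refine ⟨t / δ, div_nonneg ht0 hδ.le, ?_⟩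
      have hsplit : A + ((t / δ : ℝ) : ℂ) • B
          = (A + (t : ℂ) • 1) + ((t / δ : ℝ) : ℂ) • (B - (δ : ℂ) • 1) := by
        rw [smul_sub, smul_smul]
        have : ((t / δ : ℝ) : ℂ) * (δ : ℂ) = (t : ℂ) := by
          rw [← Complex.ofReal_mul]
          congr 1
          field_simp
        rw [this]
        abel
      rw [hsplit]
      exact hAt.add (psd_smul hBδ (div_nonneg ht0 hδ.le))

lemma psd_kron_one {m n : Type*} [Fintype m] [DecidableEq m] [Fintype n] [DecidableEq n]
    {M : Matrix m m ℂ} (hM : M.PosSemidef) :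
    (M ⊗ₖ (1 : Matrix n n ℂ)).PosSemidef := by
  obtain ⟨N, hN⟩ := psd_eq_conjTranspose_mul_self hM
  have : M ⊗ₖ (1 : Matrix n n ℂ)
      = (N ⊗ₖ (1 : Matrix n n ℂ))ᴴ * (N ⊗ₖ (1 : Matrix n n ℂ)) := by
    have hct : (N ⊗ₖ (1 : Matrix n n ℂ))ᴴ = Nᴴ ⊗ₖ (1 : Matrix n n ℂ)ᴴ := by
      ext ⟨i, a⟩ ⟨j, b⟩
      simp only [conjTranspose_apply, kroneckerMap_apply, star_mul']
    rw [hct, conjTranspose_one]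
    rw [← mul_kronecker_mul, one_mul, hN]
  rw [this]
  exact Matrix.posSemidef_conjTranspose_mul_self _


lemma real_smul_eq {d : ℕ} (a : ℝ) (x : Mat d) : a • x = (a : ℂ) • x := by
  rw [← algebraMap_smul ℂ a x, Complex.coe_algebraMap]

noncomputable def hermPart {d : ℕ} : Mat d →ₗ[ℝ] Mat d where
  toFun X := (2⁻¹ : ℝ) • (X + Xᴴ)
  map_add' X Y := by
    show (2⁻¹ : ℝ) • (X + Y + (X + Y)ᴴ) = (2⁻¹ : ℝ) • (X + Xᴴ) + (2⁻¹ : ℝ) • (Y + Yᴴ)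
    rw [conjTranspose_add, ← smul_add]
    congr 1
    abel
  map_smul' r X := by
    show (2⁻¹ : ℝ) • (r • X + (r • X)ᴴ) = r • ((2⁻¹ : ℝ) • (X + Xᴴ))
    rw [conjTranspose_smul, star_trivial, ← smul_add, smul_comm]

lemma hermPart_apply {d : ℕ} (X : Mat d) : hermPart X = (2⁻¹ : ℝ) • (X + Xᴴ) := rfl

lemma hermPart_of_herm {d : ℕ} {X : Mat d} (h : Xᴴ = X) : hermPart X = X := by
  rw [hermPart_apply, h, ← two_smul ℝ X, smul_smul]
  norm_num

lemma hermPart_I_smul_of_herm {d : ℕ} {X : Mat d} (h : Xᴴ = X) :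
    hermPart (Complex.I • X) = 0 := by
  rw [hermPart_apply, conjTranspose_smul, Complex.star_def, Complex.conj_I, h, neg_smul,
    add_neg_cancel, smul_zero]

lemma hermPart_conjTranspose {d : ℕ} (X : Mat d) : hermPart Xᴴ = hermPart X := by
  rw [hermPart_apply, hermPart_apply, conjTranspose_conjTranspose, add_comm]

lemma hermPart_I_smul_conjTranspose {d : ℕ} (X : Mat d) :
    hermPart (Complex.I • Xᴴ) = -hermPart (Complex.I • X) := by
  rw [hermPart_apply, hermPart_apply, conjTranspose_smul, conjTranspose_smul,
    Complex.star_def, Complex.conj_I, conjTranspose_conjTranspose]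
  module

lemma psd_smul' {n : Type*} [Fintype n] {M : Matrix n n ℂ} (hM : M.PosSemidef) {c : ℝ}
    (hc : 0 ≤ c) : ((c : ℂ) • M).PosSemidef := by
  refine Matrix.PosSemidef.of_dotProduct_mulVec_nonneg ?_ ?_
  · show ((c : ℂ) • M)ᴴ = _
    rw [conjTranspose_smul, hM.1.eq]
    norm_num
  · intro x
    have := hM.dotProduct_mulVec_nonneg x
    rw [Matrix.smul_mulVec, dotProduct_smul, smul_eq_mul]
    exact mul_nonneg (by exact_mod_cast hc) this

lemma exists_pos_functional {d : ℕ} (S : Submodule ℂ (Mat d))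
    (hherm : ∀ X ∈ S, Xᴴ ∈ S)
    (hnopos : ∀ X ∈ S, Matrix.PosSemidef X → X = 0) :
    ∃ φ : Mat d →ₗ[ℂ] ℂ,
      (∀ X ∈ S, φ X = 0) ∧
      (∀ X : Mat d, Xᴴ = X → (φ X).im = 0) ∧
      (∀ w : Fin d → ℂ, w ≠ 0 → 0 < (φ (Matrix.vecMulVec w (star w))).re) ∧
      (∀ X : Mat d, φ Xᴴ = star (φ X)) := by
  classical
  set t : Set (Mat d) := {X | X ∈ S ∧ Xᴴ = X} with ht
  set Q : Set (Mat d) := {B | (∑ k, ∑ i, Complex.normSq (B k i)) = 1} with hQdef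
  set s : Set (Mat d) := (fun B : Mat d => Bᴴ * B) '' Q with hsdef
  -- s is the set of PSD matrices with trace one
  have htrace : ∀ B : Mat d, (Bᴴ * B).trace = ((∑ k, ∑ i, Complex.normSq (B k i) : ℝ) : ℂ) := by
    intro B
    rw [Matrix.trace]
    push_cast
    rw [Finset.sum_comm]
    refine Finset.sum_congr rfl fun i _ => ?_
    rw [Matrix.diag_apply, Matrix.mul_apply]
    refine Finset.sum_congr rfl fun k _ => ?_
    rw [conjTranspose_apply, Complex.normSq_eq_conj_mul_self]
    rfl
  have hseq : s = {P : Mat d | P.PosSemidef ∧ P.trace = 1} := by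
    ext P
    constructor
    · rintro ⟨B, hBQ, rfl⟩
      refine ⟨Matrix.posSemidef_conjTranspose_mul_self B, ?_⟩
      rw [htrace B]
      have h2 : (∑ k, ∑ i, Complex.normSq (B k i)) = 1 := hBQ
      rw [h2]
      norm_num
    · rintro ⟨hP, hPt⟩
      obtain ⟨B, rfl⟩ := psd_eq_conjTranspose_mul_self hP
      refine ⟨B, ?_, rfl⟩
      have h1 : ((∑ k, ∑ i, Complex.normSq (B k i) : ℝ) : ℂ) = 1 := by
        rw [← htrace B]; exact hPt
      show (∑ k, ∑ i, Complex.normSq (B k i)) = 1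
      exact_mod_cast h1
  have hconv_s : Convex ℝ s := by
    rw [hseq]
    intro x hx y hy a b ha hb hab
    constructor
    · rw [real_smul_eq, real_smul_eq]
      exact (psd_smul' hx.1 ha).add (psd_smul' hy.1 hb)
    · rw [real_smul_eq, real_smul_eq, Matrix.trace_add, Matrix.trace_smul, Matrix.trace_smul,
        hx.2, hy.2]
      push_cast
      simp only [smul_eq_mul, mul_one]
      exact_mod_cast hab
  have hQc : IsClosed Q := by
    have hcont : Continuous fun B : Mat d => ∑ k, ∑ i, Complex.normSq (B k i) :=
      continuous_finset_sum _ fun k _ => continuous_finset_sum _ fun i _ =>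
        Complex.continuous_normSq.comp ((continuous_apply i).comp (continuous_apply k))
    exact isClosed_eq hcont continuous_const
  have hQcompact : IsCompact Q := by
    refine IsCompact.of_isClosed_subset
      (isCompact_univ_pi (fun k : Fin d =>
        (isCompact_univ_pi (fun i : Fin d => isCompact_closedBall (0 : ℂ) 1))) :
        IsCompact ((Set.univ.pi fun _ : Fin d => Set.univ.pi fun _ : Fin d =>
          Metric.closedBall (0 : ℂ) 1) : Set (Mat d)))
      hQc ?_
    intro B hB
    refine Set.mem_univ_pi.mpr ?_
    intro k
    rw [Set.mem_univ_pi]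
    intro i
    rw [Metric.mem_closedBall, dist_zero_right]
    have h1 : Complex.normSq (B k i) ≤ 1 := by
      rw [← hB]
      refine Finset.single_le_sum (f := fun k => ∑ i, Complex.normSq (B k i))
        (fun k _ => Finset.sum_nonneg fun i _ => Complex.normSq_nonneg _) (Finset.mem_univ k)
        |>.trans' ?_
      exact Finset.single_le_sum (fun i _ => Complex.normSq_nonneg _) (Finset.mem_univ i)
    have h2 : ‖B k i‖ ^ 2 ≤ 1 := by
      rw [← Complex.normSq_eq_norm_sq]
      exact h1
    nlinarith [norm_nonneg (B k i)]
  have hscompact : IsCompact s :=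
    hQcompact.image ((continuous_id.matrix_conjTranspose).matrix_mul continuous_id)
  have hconv_t : Convex ℝ t := by
    intro x hx y hy a b ha hb hab
    constructor
    · rw [real_smul_eq, real_smul_eq]
      exact S.add_mem (S.smul_mem _ hx.1) (S.smul_mem _ hy.1)
    · simp only [conjTranspose_add, conjTranspose_smul, star_trivial]
      rw [hx.2, hy.2]
  have hclosed_t : IsClosed t := by
    have h1 : IsClosed (S : Set (Mat d)) := S.closed_of_finiteDimensional
    have h2 : IsClosed {X : Mat d | Xᴴ = X} :=
      isClosed_eq (continuous_id.matrix_conjTranspose) continuous_id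
    exact h1.inter h2
  have hdisj : Disjoint s t := by
    rw [Set.disjoint_left]
    rintro P hPs hPt
    rw [hseq] at hPs
    have h0 : P = 0 := hnopos P hPt.1 hPs.1
    rw [h0] at hPs
    have := hPs.2
    rw [Matrix.trace_zero] at this
    exact one_ne_zero this.symm
  obtain ⟨f, u, v, hfs, huv, hft⟩ :=
    geometric_hahn_banach_compact_closed hconv_s hscompact hconv_t hclosed_t hdisj
  have hf0 : ∀ X : Mat d, X ∈ S → Xᴴ = X → f X = 0 := by
    intro X hXS hXH
    by_contra hne
    have hmem : ∀ r : ℝ, r • X ∈ t := by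
      intro r
      refine ⟨by rw [real_smul_eq]; exact S.smul_mem _ hXS, ?_⟩
      rw [conjTranspose_smul, star_trivial, hXH]
    have h1 := hft _ (hmem ((v - 1) / f X))
    rw [f.map_smul, smul_eq_mul, div_mul_cancel₀ _ hne] at h1
    linarith
  have hv0 : v < 0 := by
    have := hft 0 ⟨S.zero_mem, by simp⟩
    simpa using this
  set g : Mat d →ₗ[ℝ] ℝ := f.toLinearMap.comp (hermPart (d := d)) with hg
  set ψ : Mat d →ₗ[ℂ] ℂ := LinearMap.extendTo𝕜' g with hψ
  have hψ_apply : ∀ X : Mat d,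
      ψ X = (f (hermPart X) : ℂ) - Complex.I * (f (hermPart (Complex.I • X)) : ℂ) := by
    intro X
    show (g X : ℂ) - Complex.I * (g (Complex.I • X) : ℂ) = _
    norm_num [hg]
  refine ⟨-ψ, ?_, ?_, ?_, ?_⟩
  · intro X hX
    have h1 : hermPart X ∈ t := by
      refine ⟨?_, ?_⟩
      · rw [hermPart_apply, real_smul_eq]
        exact S.smul_mem _ (S.add_mem hX (hherm X hX))
      · rw [hermPart_apply, conjTranspose_smul, star_trivial, conjTranspose_add,
          conjTranspose_conjTranspose, add_comm]
    have h2 : hermPart (Complex.I • X) ∈ t := by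
      have hIX : Complex.I • X ∈ S := S.smul_mem _ hX
      refine ⟨?_, ?_⟩
      · rw [hermPart_apply, real_smul_eq]
        exact S.smul_mem _ (S.add_mem hIX (hherm _ hIX))
      · rw [hermPart_apply, conjTranspose_smul, star_trivial, conjTranspose_add,
          conjTranspose_conjTranspose, add_comm]
    rw [LinearMap.neg_apply, hψ_apply, hf0 _ h1.1 h1.2, hf0 _ h2.1 h2.2]
    norm_num
  · intro X hX
    rw [LinearMap.neg_apply, hψ_apply, hermPart_of_herm hX, hermPart_I_smul_of_herm hX]
    simp
  · intro w hw
    set P : Mat d := Matrix.vecMulVec w (star w) with hP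
    have hermP : Pᴴ = P := by
      ext i j
      simp only [conjTranspose_apply, hP, Matrix.vecMulVec_apply, Pi.star_apply, star_mul',
        star_star]
      ring
    obtain ⟨i₀, hi₀⟩ : ∃ i, w i ≠ 0 := by
      by_contra h
      push_neg at h
      exact hw (funext h)
    set τ : ℝ := ∑ i, Complex.normSq (w i) with hτ
    have hτpos : 0 < τ :=
      Finset.sum_pos' (fun i _ => Complex.normSq_nonneg _)
        ⟨i₀, Finset.mem_univ _, Complex.normSq_pos.mpr hi₀⟩
    set r : ℝ := (Real.sqrt τ)⁻¹ with hr
    have hrpos : 0 < r := inv_pos.mpr (Real.sqrt_pos.mpr hτpos)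
    set B : Mat d := Matrix.of fun k i => if k = i₀ then (r : ℂ) * star (w i) else 0 with hB
    have hrow : ∀ k, (∑ i, Complex.normSq (B k i)) = if k = i₀ then r ^ 2 * τ else 0 := by
      intro k
      by_cases hk : k = i₀
      · simp only [hB, Matrix.of_apply, hk, if_true]
        rw [hτ, Finset.mul_sum]
        refine Finset.sum_congr rfl fun i _ => ?_
        rw [Complex.normSq_mul, Complex.normSq_ofReal]
        simp [Complex.normSq_conj, pow_two]
      · simp [hB, hk]
    have hBQ : B ∈ Q := by
      have : (∑ k, ∑ i, Complex.normSq (B k i)) = r ^ 2 * τ := by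
        rw [Finset.sum_congr rfl fun k _ => hrow k]
        simp
      rw [hQdef]
      simp only [Set.mem_setOf_eq, this, hr]
      rw [inv_pow, Real.sq_sqrt hτpos.le]
      field_simp
    have hBsq : Bᴴ * B = (r ^ 2 : ℝ) • P := by
      ext i j
      rw [Matrix.mul_apply, Finset.sum_eq_single i₀ (fun k _ hk => by simp [hB, hk])
        (fun h => absurd (Finset.mem_univ i₀) h)]
      rw [real_smul_eq, Matrix.smul_apply]
      simp only [hB, conjTranspose_apply, Matrix.of_apply, if_pos rfl, hP,
        Matrix.vecMulVec_apply, Pi.star_apply, star_mul', star_star, Complex.star_def,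
        Complex.conj_ofReal, smul_eq_mul]
      push_cast [_root_.map_mul, Complex.conj_conj, Complex.conj_ofReal]
      ring
    have hfP : f P < 0 := by
      have h1 : f (Bᴴ * B) < u := hfs _ ⟨B, hBQ, rfl⟩
      rw [hBsq, f.map_smul, smul_eq_mul] at h1
      have h2 : r ^ 2 * f P < 0 := lt_trans h1 (lt_trans huv hv0)
      by_contra hcon
      push_neg at hcon
      nlinarith [mul_pos hrpos hrpos]
    rw [LinearMap.neg_apply, hψ_apply, hermPart_of_herm hermP, hermPart_I_smul_of_herm hermP]
    simp only [map_zero, Complex.ofReal_zero, mul_zero, sub_zero, Complex.neg_re,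
      Complex.ofReal_re]
    linarith
  · intro X
    rw [LinearMap.neg_apply, LinearMap.neg_apply, hψ_apply, hψ_apply,
      hermPart_conjTranspose, hermPart_I_smul_conjTranspose, map_neg]
    push_cast
    simp only [star_neg, star_sub, star_mul', Complex.star_def, Complex.conj_I,
      Complex.conj_ofReal]
    ring

lemma stdBasisMatrix_conjT {d : ℕ} (i j : Fin d) :
    (single j i (1 : ℂ))ᴴ = single i j (1 : ℂ) := by
  ext a b
  simp only [conjTranspose_apply, Matrix.single, Matrix.of_apply, apply_ite, star_one,
    star_zero]
  by_cases h1 : i = a <;> by_cases h2 : j = b <;> simp [h1, h2, and_comm]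

theorem stmt8 {d d' : ℕ} (S : Submodule ℂ (Mat d))
    (hherm : ∀ X ∈ S, Xᴴ ∈ S)
    (hnopos : ∀ X ∈ S, Matrix.PosSemidef X → X = 0)
    (T : S →ₗ[ℂ] Mat d')
    (hT : ∀ X (hX : X ∈ S), T ⟨Xᴴ, hherm X hX⟩ = (T ⟨X, hX⟩)ᴴ) :
    ∃ T' : Mat d →ₗ[ℂ] Mat d', IsCP T' ∧ ∀ X (hX : X ∈ S), T' X = T ⟨X, hX⟩ := by
  classical
  obtain ⟨φ, hφS, hφim, hφpos, hφconj⟩ := exists_pos_functional S hherm hnopos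
  set G : Mat d := Matrix.of (fun i j => φ (single i j 1)) with hG
  have hGherm : G.IsHermitian := by
    ext i j
    show star (G j i) = G i j
    rw [hG]
    simp only [Matrix.of_apply]
    rw [← hφconj, stdBasisMatrix_conjT]
  have hGpd : G.PosDef := by
    refine Matrix.PosDef.of_dotProduct_mulVec_pos hGherm fun v hv => ?_
    have hquad : dotProduct (star v) (G *ᵥ v)
        = φ (Matrix.vecMulVec (star v) v) := by
      rw [apply_eq_sum φ (Matrix.vecMulVec (star v) v), dotProduct]
      refine Finset.sum_congr rfl fun i _ => ?_
      rw [Matrix.mulVec, dotProduct, Finset.mul_sum]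
      refine Finset.sum_congr rfl fun j _ => ?_
      simp only [Matrix.vecMulVec_apply, Pi.star_apply, hG, Matrix.of_apply, smul_eq_mul]
      ring
    have hvmv : Matrix.vecMulVec (star v) v
        = Matrix.vecMulVec (star v) (star (star v)) := by rw [star_star]
    have hsv : star v ≠ 0 := by
      intro h
      apply hv
      have := congrArg star h
      rwa [star_star, star_zero] at this
    have hpos := hφpos (star v) hsv
    have him : (φ (Matrix.vecMulVec (star v) (star (star v)))).im = 0 := by
      apply hφim
      ext a b
      simp only [conjTranspose_apply, Matrix.vecMulVec_apply, Pi.star_apply, star_star,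
        star_mul', star_star]
      ring
    rw [hquad, hvmv]
    rw [Complex.lt_def]
    constructor
    · simpa using hpos
    · simpa using him.symm
  -- extend T to all of Mat d
  obtain ⟨q, hq⟩ := Submodule.exists_isCompl S
  set T₀ : Mat d →ₗ[ℂ] Mat d' := T ∘ₗ (S.linearProjOfIsCompl q hq) with hT₀def
  have hT₀ : ∀ X (hX : X ∈ S), T₀ X = T ⟨X, hX⟩ := by
    intro X hX
    have : (S.linearProjOfIsCompl q hq) X = ⟨X, hX⟩ :=
      Submodule.linearProjOfIsCompl_apply_left hq ⟨X, hX⟩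
    rw [hT₀def, LinearMap.comp_apply, this]
  set adj : Mat d →ₗ[ℂ] Mat d' :=
    { toFun := fun X => (T₀ Xᴴ)ᴴ
      map_add' := by
        intro X Y
        simp [conjTranspose_add]
      map_smul' := by
        intro c X
        show (T₀ (c • X)ᴴ)ᴴ = c • (T₀ Xᴴ)ᴴ
        rw [conjTranspose_smul, LinearMap.map_smul, conjTranspose_smul, star_star] } with hadj
  have hadj_apply : ∀ X, adj X = (T₀ Xᴴ)ᴴ := fun X => rfl
  set T₁ : Mat d →ₗ[ℂ] Mat d' := (2⁻¹ : ℂ) • (T₀ + adj) with hT₁def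
  have hT₁apply : ∀ X, T₁ X = (2⁻¹ : ℂ) • (T₀ X + (T₀ Xᴴ)ᴴ) := by
    intro X
    rw [hT₁def]
    simp [hadj_apply]
  have hT₁S : ∀ X (hX : X ∈ S), T₁ X = T ⟨X, hX⟩ := by
    intro X hX
    rw [hT₁apply, hT₀ X hX, hT₀ Xᴴ (hherm X hX), hT X hX, conjTranspose_conjTranspose,
      ← two_smul ℂ (T ⟨X, hX⟩), smul_smul]
    norm_num
  have hT₁herm : ∀ X, T₁ Xᴴ = (T₁ X)ᴴ := by
    intro X
    rw [hT₁apply, hT₁apply, conjTranspose_smul, conjTranspose_add,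
      conjTranspose_conjTranspose, conjTranspose_conjTranspose]
    congr 1
    · norm_num
    · rw [add_comm]
  have hChoi₁ : (choi T₁).IsHermitian := by
    ext ⟨i, a⟩ ⟨j, b⟩
    show star (choi T₁ (j, b) (i, a)) = choi T₁ (i, a) (j, b)
    show star (T₁ (single j i 1) b a) = T₁ (single i j 1) a b
    rw [← Matrix.conjTranspose_apply, ← hT₁herm, stdBasisMatrix_conjT]
  set Δ : Mat d →ₗ[ℂ] Mat d' := φ.smulRight (1 : Mat d') with hΔdef
  have hChoiΔ : choi Δ = G ⊗ₖ (1 : Mat d') := by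
    ext ⟨i, a⟩ ⟨j, b⟩
    show Δ (single i j 1) a b = G i j * (1 : Mat d') a b
    rw [hΔdef]
    simp [LinearMap.smulRight_apply, hG]
  obtain ⟨δ, hδ, hGδ⟩ := posdef_delta hGpd
  have hBig : ((G ⊗ₖ (1 : Mat d')) - (δ : ℂ) • 1).PosSemidef := by
    have h1 := psd_kron_one (n := Fin d') hGδ
    have h2 : (G - (δ : ℂ) • 1) ⊗ₖ (1 : Mat d')
        = G ⊗ₖ (1 : Mat d') - (δ : ℂ) • 1 := by
      ext ⟨i, a⟩ ⟨j, b⟩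
      simp only [kroneckerMap_apply, Matrix.sub_apply, Matrix.smul_apply, Matrix.one_apply,
        smul_eq_mul, sub_mul, Prod.mk.injEq]
      by_cases hij : i = j <;> by_cases hab : a = b <;> simp [hij, hab]
    rwa [h2] at h1
  obtain ⟨c, hc, hPSD⟩ := exists_smul_add hChoi₁ hδ hBig
  refine ⟨T₁ + (c : ℂ) • Δ, ?_, ?_⟩
  · apply isCP_of_choi_psd
    have hchoiT' : choi (T₁ + (c : ℂ) • Δ) = choi T₁ + (c : ℂ) • (G ⊗ₖ (1 : Mat d')) := by
      rw [← hChoiΔ]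
      ext ⟨i, a⟩ ⟨j, b⟩
      show (T₁ + (c : ℂ) • Δ) (single i j 1) a b
          = choi T₁ (i, a) (j, b) + ((c : ℂ) • choi Δ) (i, a) (j, b)
      simp [choi, LinearMap.add_apply, LinearMap.smul_apply]
    rw [hchoiT']
    exact hPSD
  · intro X hX
    simp only [LinearMap.add_apply, LinearMap.smul_apply, hΔdef, LinearMap.smulRight_apply]
    rw [hφS X hX, hT₁S X hX]
    simp
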